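/- arXiv:2409.18252 — 2 statements merged into one kernel-verified Lean document; each statement's English description precedes it below -/
import Mathlib

section
/- If a sequence (ν_k) of finite Borel measures on T² converges weakly to a finite Borel measure ν_∞ (i.e. ∫φ dν_k → ∫φ dν_∞ for every continuous function φ on T²), then for every ρ>0 one has ‖ν_∞‖_ρ = lim_{k→∞} ‖ν_k‖_ρ. -/
open MeasureTheory Metric Filter Topology
open scoped ENNReal

/-- The flat two-torus `ℝ²/ℤ²`, realized as the `L²`-product of two circles of length one. -/
abbrev T2 : Type := PiLp 2 fun _ : Fin 2 => AddCircle (1 : ℝ)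

noncomputable instance : MeasurableSpace T2 := borel T2
instance : BorelSpace T2 := ⟨rfl⟩
instance : CompactSpace T2 :=
  (PiLp.homeomorph 2 fun _ : Fin 2 => AddCircle (1 : ℝ)).symm.compactSpace

/-- The condition `C₀⁻¹ ≤ dm/dLeb ≤ C₀` for the smooth measure `m` in terms of the Haar
probability measure `Leb`. -/
def DensityBounds (C₀ : ℝ) (Leb m : Measure T2) : Prop :=
  ∀ s : Set T2, MeasurableSet s →
    ENNReal.ofReal C₀⁻¹ * Leb s ≤ m s ∧ m s ≤ ENNReal.ofReal C₀ * Leb s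

/-- The `ρ`-inner product `⟨ν,ν'⟩_ρ = ρ⁻⁴ ∫ ν(B(z,ρ)) ν'(B(z,ρ)) dm(z)`. -/
noncomputable def rinner (m ν ν' : Measure T2) (ρ : ℝ) : ℝ :=
  (1 / ρ ^ 4) * ∫ z, (ν (ball z ρ)).toReal * (ν' (ball z ρ)).toReal ∂m

/-- The `ρ`-semi-norm `‖ν‖_ρ = ⟨ν,ν⟩_ρ^{1/2}`. -/
noncomputable def rnorm (m ν : Measure T2) (ρ : ℝ) : ℝ :=
  Real.sqrt (rinner m ν ν ρ)


noncomputable def Hpi : T2 ≃ₜ (∀ _ : Fin 2, AddCircle (1:ℝ)) :=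
  ⟨WithLp.equiv 2 _, PiLp.continuous_ofLp _ _, PiLp.continuous_toLp _ _⟩
instance : SecondCountableTopology T2 := Hpi.isEmbedding.secondCountableTopology

noncomputable def Phi : (AddCircle (1:ℝ) × AddCircle (1:ℝ)) ≃+ T2 where
  toFun p := (WithLp.equiv 2 _).symm ![p.1, p.2]
  invFun x := (WithLp.equiv 2 _ x 0, WithLp.equiv 2 _ x 1)
  left_inv p := by simp
  right_inv x := by
    ext i
    fin_cases i <;> rfl
  map_add' p q := by
    ext i
    fin_cases i <;> rfl

lemma Phi_continuous : Continuous (Phi : AddCircle (1:ℝ) × AddCircle (1:ℝ) → T2) := by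
  apply (PiLp.continuous_toLp 2 (fun _ : Fin 2 => AddCircle (1:ℝ))).comp
  refine continuous_pi fun i => ?_
  fin_cases i
  · exact continuous_fst
  · exact continuous_snd

lemma Phi_symm_continuous : Continuous (Phi.symm : T2 → AddCircle (1:ℝ) × AddCircle (1:ℝ)) := by
  refine Continuous.prodMk ?_ ?_ <;>
    exact (continuous_apply _).comp (PiLp.continuous_ofLp 2 (fun _ : Fin 2 => AddCircle (1:ℝ)))

instance : IsProbabilityMeasure (volume : Measure (AddCircle (1:ℝ))) :=
  ⟨by rw [AddCircle.measure_univ]; simp⟩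

noncomputable def mu2 : Measure T2 :=
  Measure.map Phi ((volume : Measure (AddCircle (1:ℝ))).prod volume)

instance : IsProbabilityMeasure mu2 :=
  Measure.isProbabilityMeasure_map Phi_continuous.measurable.aemeasurable

instance : mu2.IsAddHaarMeasure :=
  Phi.isAddHaarMeasure_map _ Phi_continuous Phi_symm_continuous

lemma leb_eq_mu2 (Leb : Measure T2) [IsProbabilityMeasure Leb] [Leb.IsAddHaarMeasure] :
    Leb = mu2 :=
  Measure.isAddHaarMeasure_eq_of_isProbabilityMeasure _ _

lemma circle_singleton_null (x : AddCircle (1:ℝ)) : volume {x} = 0 := by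
  have h := AddCircle.volume_closedBall (T := 1) (x := x) 0
  rw [closedBall_zero] at h
  simpa using h

lemma circle_sphere_null (x : AddCircle (1:ℝ)) (c : ℝ) :
    volume {b : AddCircle (1:ℝ) | dist b x = c} = 0 := by
  have hsub : {b : AddCircle (1:ℝ) | dist b x = c} ⊆
      {x + ((c : ℝ) : AddCircle (1:ℝ)), x + ((-c : ℝ) : AddCircle (1:ℝ))} := by
    intro b hb
    simp only [Set.mem_setOf_eq] at hb
    obtain ⟨y, hy⟩ : ∃ y : ℝ, ((y : ℝ) : AddCircle (1:ℝ)) = b - x :=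
      Quotient.exists_rep (b - x)
    have hnorm : ‖b - x‖ = c := by rw [← hb, dist_eq_norm]
    have hc : |y - round ((1:ℝ)⁻¹ * y) * 1| = c := by
      rw [← AddCircle.norm_eq (p := 1), hy, hnorm]
    simp only [inv_one, one_mul, mul_one] at hc
    have hcases : y - round y = c ∨ y - round y = -c := by
      rcases abs_eq (by rw [← hc]; exact abs_nonneg _) |>.mp hc with h | h
      · exact Or.inl h
      · exact Or.inr h
    have hbx : b - x = ((y - round y : ℝ) : AddCircle (1:ℝ)) := by
      rw [AddCircle.coe_sub, hy]
      have : ((round y : ℝ) : AddCircle (1:ℝ)) = 0 := by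
        rw [show ((round y : ℝ)) = (round y : ℤ) • (1:ℝ) by simp]
        rw [AddCircle.coe_zsmul, AddCircle.coe_period, smul_zero]
      rw [this, sub_zero]
    simp only [Set.mem_insert_iff, Set.mem_singleton_iff]
    rcases hcases with h | h
    · rw [h] at hbx
      exact Or.inl (by rw [← hbx]; abel)
    · rw [h] at hbx
      exact Or.inr (by rw [← hbx]; abel)
  refine measure_mono_null hsub ?_
  rw [Set.insert_eq]
  exact measure_union_null (circle_singleton_null _) (circle_singleton_null _)

lemma mu2_sphere_null (z : T2) (ρ : ℝ) : mu2 (sphere z ρ) = 0 := by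
  have hsm : MeasurableSet (sphere z ρ) := (isClosed_sphere).measurableSet
  rw [mu2, Measure.map_apply Phi_continuous.measurable hsm]
  rw [Measure.measure_prod_null ((isClosed_sphere.preimage Phi_continuous).measurableSet)]
  refine Filter.Eventually.of_forall fun a => ?_
  have hdist : ∀ b : AddCircle (1:ℝ), dist (Phi (a, b)) z =
      (dist a (z 0) ^ (2:ℝ) + dist b (z 1) ^ (2:ℝ)) ^ ((1:ℝ)/2) := by
    intro b
    rw [PiLp.dist_eq_sum (by norm_num : 0 < (2:ℝ≥0∞).toReal)]
    norm_num [Fin.sum_univ_two]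
    rfl
  set c : ℝ := (ρ ^ (2:ℝ) - dist a (z 0) ^ (2:ℝ)) ^ ((1:ℝ)/2) with hc
  have hsub : (Prod.mk a ⁻¹' (Phi ⁻¹' sphere z ρ)) ⊆ {b | dist b (z 1) = c} := by
    intro b hb
    have hb' : dist (Phi (a, b)) z = ρ := hb
    rw [hdist b] at hb'
    have h0 : (0:ℝ) ≤ dist a (z 0) ^ (2:ℝ) + dist b (z 1) ^ (2:ℝ) :=
      add_nonneg (Real.rpow_nonneg dist_nonneg _) (Real.rpow_nonneg dist_nonneg _)
    have hsumeq : dist a (z 0) ^ (2:ℝ) + dist b (z 1) ^ (2:ℝ) = ρ ^ (2:ℝ) := by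
      have h2 : ((dist a (z 0) ^ (2:ℝ) + dist b (z 1) ^ (2:ℝ)) ^ ((1:ℝ)/2)) ^ (2:ℝ)
          = ρ ^ (2:ℝ) := by rw [hb']
      rwa [← Real.rpow_mul h0, one_div, inv_mul_cancel₀ (two_ne_zero), Real.rpow_one] at h2
    have hd1 : dist b (z 1) ^ (2:ℝ) = ρ ^ (2:ℝ) - dist a (z 0) ^ (2:ℝ) := by linarith
    show dist b (z 1) = c
    rw [hc, ← hd1, ← Real.rpow_mul dist_nonneg]
    norm_num
  exact measure_mono_null hsub (circle_sphere_null (z 1) c)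

lemma measurable_ballMeasure (ν : Measure T2) [SFinite ν] (ρ : ℝ) :
    Measurable fun z : T2 => ν (ball z ρ) := by
  have hU : MeasurableSet {p : T2 × T2 | dist p.2 p.1 < ρ} :=
    (isOpen_lt (Continuous.dist continuous_snd continuous_fst) continuous_const).measurableSet
  exact measurable_measure_prodMk_left hU

lemma ae_sphere_null (m : Measure T2) [IsFiniteMeasure m] (ρ : ℝ)
    (hm_null : ∀ x : T2, m (sphere x ρ) = 0) (ν' : Measure T2) [IsFiniteMeasure ν'] :
    ∀ᵐ z ∂m, ν' (sphere z ρ) = 0 := by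
  have hS : MeasurableSet {p : T2 × T2 | dist p.2 p.1 = ρ} :=
    (isClosed_eq (Continuous.dist continuous_snd continuous_fst) continuous_const).measurableSet
  have hmeas : Measurable fun z : T2 => ν' (sphere z ρ) :=
    measurable_measure_prodMk_left hS
  have key : ∫⁻ z, ν' (sphere z ρ) ∂m = 0 := by
    have h1 : ∫⁻ z, ν' (sphere z ρ) ∂m = (m.prod ν') {p : T2 × T2 | dist p.2 p.1 = ρ} :=
      (Measure.prod_apply hS).symm
    have h2 : (m.prod ν') {p : T2 × T2 | dist p.2 p.1 = ρ} = 0 := by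
      rw [Measure.prod_apply_symm hS]
      have hz : ∀ y : T2, m {a : T2 | dist y a = ρ} = 0 := by
        intro y
        have he : {a : T2 | dist y a = ρ} = sphere y ρ :=
          Set.ext fun a => by simp only [Set.mem_setOf_eq, mem_sphere]; rw [dist_comm]
        rw [he]; exact hm_null y
      simp [hz]
    rw [h1, h2]
  have := (lintegral_eq_zero_iff hmeas).mp key
  filter_upwards [this] with z hz using hz

lemma tendsto_measure_open_of_weak (ν : ℕ → Measure T2) [∀ k, IsFiniteMeasure (ν k)]
    (ν' : Measure T2) [IsFiniteMeasure ν']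
    (hconv : ∀ φ : T2 → ℝ, Continuous φ →
      Tendsto (fun k => ∫ x, φ x ∂(ν k)) atTop (𝓝 (∫ x, φ x ∂ν')))
    {E : Set T2} (hE : IsOpen E) (hfront : ν' (frontier E) = 0) :
    Tendsto (fun k => ν k E) atTop (𝓝 (ν' E)) := by
  let νf : ℕ → FiniteMeasure T2 := fun k => ⟨ν k, inferInstance⟩
  let νf' : FiniteMeasure T2 := ⟨ν', inferInstance⟩
  have hweak : Tendsto νf atTop (𝓝 νf') := by
    rw [FiniteMeasure.tendsto_iff_forall_integral_tendsto]
    intro f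
    exact hconv f f.continuous
  have hclosed : ∀ F : Set T2, IsClosed F →
      (atTop.limsup fun k => ν k F) ≤ ν' F := fun F hF =>
    FiniteMeasure.limsup_measure_closed_le_of_tendsto hweak hF
  have hmassR : Tendsto (fun k => ∫ x, (1:ℝ) ∂(ν k)) atTop (𝓝 (∫ x, (1:ℝ) ∂ν')) :=
    hconv (fun _ => (1:ℝ)) continuous_const
  simp only [integral_const, smul_eq_mul, mul_one] at hmassR
  have hmass : Tendsto (fun k => ν k Set.univ) atTop (𝓝 (ν' Set.univ)) := by
    have h2 := ENNReal.tendsto_ofReal hmassR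
    simpa [ENNReal.ofReal_toReal (measure_ne_top _ _)] using h2
  have hopen : ∀ G : Set T2, IsOpen G → ν' G ≤ atTop.liminf fun k => ν k G := by
    intro G hG
    refine ENNReal.le_of_forall_pos_le_add fun ε hε _ => ?_
    set δ : ℝ≥0∞ := (ε : ℝ≥0∞) / 2 with hδdef
    have hδpos : (0:ℝ≥0∞) < δ :=
      ENNReal.div_pos (by exact_mod_cast hε.ne') (by norm_num)
    have hev1 : ∀ᶠ k in atTop, ν' Set.univ < ν k Set.univ + δ := by
      have h := hmass.add (tendsto_const_nhds (x := δ))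
      exact h.eventually_const_lt (ENNReal.lt_add_right (measure_ne_top _ _) hδpos.ne')
    have hev2 : ∀ᶠ k in atTop, ν k Gᶜ < ν' Gᶜ + δ :=
      eventually_lt_of_limsup_lt
        (lt_of_le_of_lt (hclosed Gᶜ hG.isClosed_compl)
          (ENNReal.lt_add_right (measure_ne_top _ _) hδpos.ne'))
    have hev : ∀ᶠ k in atTop, ν' G ≤ ν k G + (ε : ℝ≥0∞) := by
      filter_upwards [hev1, hev2] with k h1 h2
      have huniv' : ν' G + ν' Gᶜ = ν' Set.univ := measure_add_measure_compl hG.measurableSet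
      have hunivk : ν k G + ν k Gᶜ = ν k Set.univ := measure_add_measure_compl hG.measurableSet
      have hchain : ν' G + ν' Gᶜ ≤ (ν k G + (ε : ℝ≥0∞)) + ν' Gᶜ := by
        calc ν' G + ν' Gᶜ = ν' Set.univ := huniv'
          _ ≤ ν k Set.univ + δ := h1.le
          _ = ν k G + ν k Gᶜ + δ := by rw [hunivk]
          _ ≤ ν k G + (ν' Gᶜ + δ) + δ := by gcongr
          _ = (ν k G + (δ + δ)) + ν' Gᶜ := by ring
          _ = (ν k G + (ε : ℝ≥0∞)) + ν' Gᶜ := by rw [hδdef, ENNReal.add_halves]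
      exact (ENNReal.add_le_add_iff_right (measure_ne_top _ _)).mp hchain
    have hsub : ν' G - (ε : ℝ≥0∞) ≤ atTop.liminf fun k => ν k G :=
      le_liminf_of_le (by isBoundedDefault)
        (hev.mono fun k hk => tsub_le_iff_right.mpr hk)
    exact tsub_le_iff_right.mp hsub
  have hnull : ν' (closure E \ E) = 0 := by
    have : closure E \ E = frontier E := by
      rw [frontier, hE.interior_eq]
    rwa [this]
  exact tendsto_measure_of_le_liminf_measure_of_limsup_measure_le
    (Eq.subset rfl) subset_closure hnull (hopen E hE) (hclosed _ isClosed_closure)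

/-- If a sequence `(ν_k)` of finite Borel measures on `T²` converges weakly
to a finite Borel measure `ν_∞` (i.e. `∫φ dν_k → ∫φ dν_∞` for every continuous `φ`), then for
every `ρ > 0` one has `‖ν_∞‖_ρ = lim_k ‖ν_k‖_ρ`. -/
theorem rnorm_of_weak_limit
    (C₀ : ℝ) (hC₀ : 1 ≤ C₀) (Leb m : Measure T2)
    [IsProbabilityMeasure Leb] [Leb.IsAddHaarMeasure]
    [IsProbabilityMeasure m] (hm : DensityBounds C₀ Leb m)
    (ν : ℕ → Measure T2) (hν : ∀ k, IsFiniteMeasure (ν k))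
    (ν' : Measure T2) [IsFiniteMeasure ν']
    (hconv : ∀ φ : T2 → ℝ, Continuous φ →
      Tendsto (fun k => ∫ x, φ x ∂(ν k)) atTop (𝓝 (∫ x, φ x ∂ν'))) :
    ∀ ρ : ℝ, 0 < ρ → Tendsto (fun k => rnorm m (ν k) ρ) atTop (𝓝 (rnorm m ν' ρ)) := by
  intro ρ hρ
  haveI : ∀ k, IsFiniteMeasure (ν k) := hν
  have hLs : ∀ z : T2, Leb (sphere z ρ) = 0 := fun z => by
    rw [leb_eq_mu2 Leb]; exact mu2_sphere_null z ρ
  have hms : ∀ z : T2, m (sphere z ρ) = 0 := fun z =>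
    le_antisymm (le_trans (hm _ isClosed_sphere.measurableSet).2 (by rw [hLs z]; simp)) zero_le
  have hae : ∀ᵐ z ∂m, ν' (sphere z ρ) = 0 := ae_sphere_null m ρ hms ν'
  have hball : ∀ᵐ z ∂m, Tendsto (fun k => ν k (ball z ρ)) atTop (𝓝 (ν' (ball z ρ))) := by
    filter_upwards [hae] with z hz
    exact tendsto_measure_open_of_weak ν ν' hconv isOpen_ball
      (measure_mono_null frontier_ball_subset_sphere hz)
  have hmassR : Tendsto (fun k => ((ν k) Set.univ).toReal) atTop (𝓝 ((ν' Set.univ).toReal)) := by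
    have h := hconv (fun _ => (1:ℝ)) continuous_const
    simpa [integral_const, Measure.real] using h
  obtain ⟨M, hM⟩ := hmassR.bddAbove_range
  have hMk : ∀ k, ((ν k) Set.univ).toReal ≤ M := fun k => hM (Set.mem_range_self k)
  have hint : Tendsto (fun k => ∫ z, ((ν k) (ball z ρ)).toReal * ((ν k) (ball z ρ)).toReal ∂m)
      atTop (𝓝 (∫ z, (ν' (ball z ρ)).toReal * (ν' (ball z ρ)).toReal ∂m)) := by
    refine tendsto_integral_of_dominated_convergence (fun _ => M * M) ?_ ?_ ?_ ?_
    · intro k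
      exact (((measurable_ballMeasure (ν k) ρ).ennreal_toReal).mul
        ((measurable_ballMeasure (ν k) ρ).ennreal_toReal)).aestronglyMeasurable
    · exact integrable_const _
    · intro k
      refine Filter.Eventually.of_forall fun z => ?_
      have hb : ((ν k) (ball z ρ)).toReal ≤ M :=
        le_trans (ENNReal.toReal_mono (measure_ne_top _ _)
          (measure_mono (Set.subset_univ _))) (hMk k)
      have h0 : 0 ≤ ((ν k) (ball z ρ)).toReal := ENNReal.toReal_nonneg
      rw [Real.norm_eq_abs, abs_of_nonneg (mul_nonneg h0 h0)]
      exact mul_le_mul hb hb h0 (le_trans h0 hb)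
    · filter_upwards [hball] with z hz
      have h1 : Tendsto (fun k => ((ν k) (ball z ρ)).toReal) atTop
          (𝓝 ((ν' (ball z ρ)).toReal)) :=
        (ENNReal.tendsto_toReal (measure_ne_top _ _)).comp hz
      exact h1.mul h1
  have hri : Tendsto (fun k => rinner m (ν k) (ν k) ρ) atTop (𝓝 (rinner m ν' ν' ρ)) := by
    unfold rinner
    exact hint.const_mul _
  unfold rnorm
  exact (Real.continuous_sqrt.tendsto _).comp hri
end

section
/- There exists a constant C₂>1, depending only on C₀, such that the following holds: for any positive numbers 0 < ρ ≤ δ₋ ≤ δ₊ ≤ 1, any Lebesgue-measurable function δ:T²→ℝ with δ(T²) ⊆ [δ₋,δ₊], and any finite Borel measure ν on T², one has ‖ν‖²_δ ≤ C₂·(1 + log(δ₊/δ₋))·‖ν‖²_ρ. -/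
open MeasureTheory Metric Filter Topology
open scoped ENNReal

/-- The generalized `r`-semi-norm (squared) for a variable radius function `r : T² → ℝ₊`:
`‖ν‖²_r = ∫ ν(B(x,r(x)))² / r(x)⁴ dm(x)`. -/
noncomputable def rnormSqFun (m ν : Measure T2) (r : T2 → ℝ) : ℝ :=
  ∫ x, (ν (ball x (r x))).toReal ^ 2 / r x ^ 4 ∂m

section Aux

lemma ac_norm_le_abs (x : ℝ) : ‖(x : AddCircle (1:ℝ))‖ ≤ |x| := by
  rw [UnitAddCircle.norm_eq]
  rcases le_or_gt (1/2) |x| with h | h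
  · exact le_trans (abs_sub_round x) h
  · have : round x = 0 := by
      rw [round_eq, Int.floor_eq_zero_iff]
      have := abs_lt.mp h
      constructor
      · linarith
      · simp; linarith
    simp [this]

lemma ac_dist_le (a b : ℝ) : dist (↑a : AddCircle (1:ℝ)) ↑b ≤ |a - b| := by
  rw [dist_eq_norm, ← AddCircle.coe_sub]
  exact ac_norm_le_abs _

lemma ac_coe_int_eq_zero (m : ℤ) : ((m : ℝ) : AddCircle (1:ℝ)) = 0 := by
  refine (QuotientAddGroup.eq_zero_iff _).mpr ?_
  exact ⟨m, by simp⟩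

lemma ac_repr (ξ : AddCircle (1:ℝ)) : ∃ a : ℝ, 0 ≤ a ∧ a < 1 ∧ (↑a : AddCircle (1:ℝ)) = ξ := by
  obtain ⟨x, rfl⟩ := QuotientAddGroup.mk_surjective ξ
  refine ⟨Int.fract x, Int.fract_nonneg x, Int.fract_lt_one x, ?_⟩
  have h1 : Int.fract x = x - (⌊x⌋ : ℝ) := (Int.self_sub_floor x).symm
  have : ((Int.fract x : ℝ) : AddCircle (1:ℝ)) = ↑x - ((⌊x⌋:ℝ) : AddCircle (1:ℝ)) := by
    rw [h1, AddCircle.coe_sub]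
  rw [this, ac_coe_int_eq_zero, sub_zero]

lemma ac_dist_grid {n : ℕ} (hn : 0 < n) {i j : ℕ} (hi : i < n) (hj : j < n) (hne : i ≠ j) :
    (1:ℝ)/n ≤ dist ((i:ℝ)/(n:ℝ) : AddCircle (1:ℝ)) ((((j:ℝ)/(n:ℝ) : ℝ)) : AddCircle (1:ℝ)) := by
  have hn' : (0:ℝ) < n := by exact_mod_cast hn
  set y : ℝ := ((i:ℝ) - (j:ℝ))/n with hy
  have hdist : dist ((i:ℝ)/(n:ℝ) : AddCircle (1:ℝ)) ((((j:ℝ)/(n:ℝ) : ℝ)) : AddCircle (1:ℝ)) = |y - round y| := by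
    rw [dist_eq_norm, ← AddCircle.coe_sub, ← sub_div, UnitAddCircle.norm_eq]
  rw [hdist]
  set t : ℤ := (i:ℤ) - (j:ℤ) - n * round y with ht
  have hteq : y - round y = (t:ℝ)/n := by
    push_cast [ht]
    rw [hy]
    field_simp
  have htne : t ≠ 0 := by
    intro h0
    have heq : (i:ℤ) - (j:ℤ) = n * round y := by omega
    have habs : |(i:ℤ) - (j:ℤ)| < n := by rw [abs_lt]; omega
    rcases eq_or_ne (round y) 0 with hr | hr
    · rw [hr, mul_zero] at heq; omega
    · have h1 : (1:ℤ) ≤ |round y| := Int.one_le_abs hr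
      have : (n:ℤ) ≤ |(i:ℤ) - (j:ℤ)| := by
        rw [heq, abs_mul, abs_of_nonneg (by positivity : (0:ℤ) ≤ (n:ℤ))]
        exact le_mul_of_one_le_right (by positivity) h1
      omega
  have : (1:ℝ) ≤ |(t:ℝ)| := by exact_mod_cast Int.one_le_abs htne
  rw [hteq, abs_div, abs_of_pos hn']
  gcongr


noncomputable def gridPt (n : ℕ) (v : Fin 2 → Fin n) : T2 :=
  WithLp.toLp 2 fun k => ((((v k : ℕ) : ℝ))/(n:ℝ) : AddCircle (1:ℝ))

lemma coord_dist_le (x y : T2) (k : Fin 2) : dist (x k) (y k) ≤ dist x y := by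
  rw [PiLp.dist_eq_of_L2]
  have h1 : dist (x k) (y k) = Real.sqrt (dist (x k) (y k) ^ 2) :=
    (Real.sqrt_sq dist_nonneg).symm
  rw [h1]
  apply Real.sqrt_le_sqrt
  exact Finset.single_le_sum (f := fun i => dist (x i) (y i) ^ 2) (fun i _ => sq_nonneg _) (Finset.mem_univ k)


lemma ac_grid_cover {n : ℕ} (hn : 0 < n) (ξ : AddCircle (1:ℝ)) :
    ∃ i : Fin n, dist ξ ((((i:ℕ):ℝ))/(n:ℝ) : AddCircle (1:ℝ)) ≤ 1/(n:ℝ) := by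
  obtain ⟨a, ha0, ha1, rfl⟩ := ac_repr ξ
  have hn' : (0:ℝ) < n := by exact_mod_cast hn
  have hfl0 : 0 ≤ ⌊(n:ℝ)*a⌋ := Int.floor_nonneg.mpr (by positivity)
  set i0 : ℕ := (⌊(n:ℝ)*a⌋).toNat with hi0
  have hi0lt : i0 < n := by
    have : (n:ℝ)*a < n := by nlinarith
    have h2 : ⌊(n:ℝ)*a⌋ < (n:ℤ) := by
      apply Int.floor_lt.mpr; exact_mod_cast this
    omega
  refine ⟨⟨i0, hi0lt⟩, ?_⟩
  have hcast : ((i0:ℝ)) = ((⌊(n:ℝ)*a⌋ : ℤ) : ℝ) := by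
    rw [hi0]; exact_mod_cast congrArg (Int.cast : ℤ → ℝ) (Int.toNat_of_nonneg hfl0)
  have key : |a - (i0:ℝ)/n| ≤ 1/n := by
    rw [abs_le]
    have h1 := Int.floor_le ((n:ℝ)*a)
    have h2 := Int.lt_floor_add_one ((n:ℝ)*a)
    rw [hcast]
    have hle : (↑⌊(n:ℝ)*a⌋)/(n:ℝ) ≤ a := by
      rw [div_le_iff₀ hn']; nlinarith
    have hge : a ≤ (↑⌊(n:ℝ)*a⌋ + 1)/(n:ℝ) := by
      rw [le_div_iff₀ hn']; nlinarith
    have hsplit : (↑⌊(n:ℝ)*a⌋ + 1)/(n:ℝ) = ↑⌊(n:ℝ)*a⌋/(n:ℝ) + 1/(n:ℝ) := by ring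
    have hpos : (0:ℝ) ≤ 1/(n:ℝ) := by positivity
    constructor <;> [linarith; linarith]
  calc dist (↑a : AddCircle (1:ℝ)) ↑((i0:ℝ)/n) ≤ |a - (i0:ℝ)/n| := ac_dist_le a _
    _ ≤ 1/n := key

lemma t2_grid_cover {n : ℕ} (hn : 0 < n) (y : T2) :
    ∃ v : Fin 2 → Fin n, dist y (gridPt n v) ≤ Real.sqrt 2 / n := by
  have hn' : (0:ℝ) < n := by exact_mod_cast hn
  choose v hv using fun k => ac_grid_cover hn (y k)
  refine ⟨v, ?_⟩
  rw [PiLp.dist_eq_of_L2]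
  have hsum : ∑ k, dist (y k) (gridPt n v k) ^ 2 ≤ 2 * (1/(n:ℝ))^2 := by
    rw [Fin.sum_univ_two]
    have h0 := hv 0; have h1 := hv 1
    have e0 : dist (y 0) (gridPt n v 0) ≤ 1/(n:ℝ) := h0
    have e1 : dist (y 1) (gridPt n v 1) ≤ 1/(n:ℝ) := h1
    nlinarith [dist_nonneg (x := y 0) (y := gridPt n v 0), dist_nonneg (x := y 1) (y := gridPt n v 1)]
  calc Real.sqrt (∑ k, dist (y k) (gridPt n v k) ^ 2) ≤ Real.sqrt (2 * (1/(n:ℝ))^2) :=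
        Real.sqrt_le_sqrt hsum
    _ = Real.sqrt 2 / n := by
        rw [Real.sqrt_mul (by norm_num), Real.sqrt_sq (by positivity)]
        field_simp



lemma leb_ball_eq (Leb : Measure T2) [Leb.IsAddHaarMeasure] (x y : T2) (r : ℝ) :
    Leb (ball x r) = Leb (ball y r) := by
  have h : ball y r = (fun z => (x - y) + z) ⁻¹' ball x r := by
    ext z
    simp only [Set.mem_preimage, mem_ball]
    constructor
    · intro hz
      have : dist (x - y + z) (x - y + y) = dist z y := dist_add_left (x - y) z y
      rw [sub_add_cancel] at this
      rw [this]; exact hz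
    · intro hz
      have : dist (x - y + z) (x - y + y) = dist z y := dist_add_left (x - y) z y
      rw [sub_add_cancel] at this
      rw [← this]; exact hz
  rw [h, measure_preimage_add]

lemma gridPt_dist_lb {n : ℕ} (hn : 0 < n) {v w : Fin 2 → Fin n} (hvw : v ≠ w) :
    (1:ℝ)/n ≤ dist (gridPt n v) (gridPt n w) := by
  obtain ⟨k, hk⟩ := Function.ne_iff.mp hvw
  refine le_trans ?_ (coord_dist_le (gridPt n v) (gridPt n w) k)
  exact ac_dist_grid hn (v k).isLt (w k).isLt (fun h => hk (Fin.ext h))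

lemma leb_ball_lower (Leb : Measure T2) [IsProbabilityMeasure Leb] [Leb.IsAddHaarMeasure]
    (x : T2) {r : ℝ} (h0 : 0 < r) (h1 : r ≤ 1) :
    ENNReal.ofReal (r^2/6) ≤ Leb (ball x r) := by
  set n : ℕ := ⌊Real.sqrt 2 / r⌋₊ + 1 with hn
  have hs2 : (1:ℝ) ≤ Real.sqrt 2 := by
    rw [show (1:ℝ) = Real.sqrt 1 by simp]; exact Real.sqrt_le_sqrt (by norm_num)
  have hs2' : Real.sqrt 2 ≤ 1.42 := by
    rw [show (1.42:ℝ) = Real.sqrt (1.42^2) by rw [Real.sqrt_sq]; norm_num]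
    exact Real.sqrt_le_sqrt (by norm_num)
  have hn0 : 0 < n := Nat.succ_pos _
  have hn' : (0:ℝ) < n := by exact_mod_cast hn0
  have hcov : Real.sqrt 2 / (n:ℝ) < r := by
    have := Nat.lt_floor_add_one (Real.sqrt 2 / r)
    rw [div_lt_iff₀ hn']
    have h2 : Real.sqrt 2 / r < n := by rw [hn]; push_cast; exact this
    rw [div_lt_iff₀ h0] at h2
    linarith [mul_comm r (n:ℝ)]
  have hcover : (Set.univ : Set T2) ⊆ ⋃ v ∈ (Finset.univ : Finset (Fin 2 → Fin n)), ball (gridPt n v) r := by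
    intro y _
    obtain ⟨v, hv⟩ := t2_grid_cover hn0 y
    exact Set.mem_biUnion (Finset.mem_univ v) (mem_ball.mpr (lt_of_le_of_lt hv hcov))
  have hsum : (1:ℝ≥0∞) ≤ (n^2 : ℕ) * Leb (ball x r) := by
    have e1 : (1:ℝ≥0∞) = Leb Set.univ := (measure_univ).symm
    rw [e1]
    calc Leb Set.univ ≤ Leb (⋃ v ∈ (Finset.univ : Finset (Fin 2 → Fin n)), ball (gridPt n v) r) :=
          measure_mono hcover
      _ ≤ ∑ v ∈ (Finset.univ : Finset (Fin 2 → Fin n)), Leb (ball (gridPt n v) r) :=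
          measure_biUnion_finset_le _ _
      _ = ∑ _v ∈ (Finset.univ : Finset (Fin 2 → Fin n)), Leb (ball x r) := by
          exact Finset.sum_congr rfl fun v _ => leb_ball_eq Leb (gridPt n v) x r
      _ = (n^2 : ℕ) * Leb (ball x r) := by
          rw [Finset.sum_const, Finset.card_univ, Fintype.card_fun]
          simp [nsmul_eq_mul, Fintype.card_fin]
  -- now conclude
  have hscal : (r^2/6) * ((n:ℝ)^2) ≤ 1 := by
    have hnle : (n:ℝ) ≤ (Real.sqrt 2 + 1)/r := by
      rw [hn]; push_cast
      have := Nat.floor_le (by positivity : (0:ℝ) ≤ Real.sqrt 2 / r)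
      have h1r : (1:ℝ) ≤ 1/r := by rw [le_div_iff₀ h0]; linarith
      calc (⌊Real.sqrt 2 / r⌋₊ : ℝ) + 1 ≤ Real.sqrt 2/r + 1/r := by linarith
        _ = (Real.sqrt 2 + 1)/r := by ring
    have hsq : (n:ℝ)^2 ≤ ((Real.sqrt 2 + 1)/r)^2 := pow_le_pow_left₀ hn'.le hnle 2
    have hexp : ((Real.sqrt 2 + 1)/r)^2 = (Real.sqrt 2 + 1)^2/r^2 := div_pow _ _ 2
    have hsqrt2 : Real.sqrt 2 ^ 2 = 2 := Real.sq_sqrt (by norm_num)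
    calc (r^2/6) * ((n:ℝ)^2) ≤ (r^2/6) * ((Real.sqrt 2 + 1)^2/r^2) := by
          rw [← hexp]
          exact mul_le_mul_of_nonneg_left hsq (by positivity)
      _ = (Real.sqrt 2 + 1)^2/6 := by field_simp
      _ ≤ 1 := by nlinarith [Real.sqrt_nonneg 2]
  have hmul : ENNReal.ofReal (r^2/6) * (n^2 : ℕ) ≤ 1 := by
    have : ((n^2:ℕ) : ℝ≥0∞) = ENNReal.ofReal ((n:ℝ)^2) := by
      rw [← ENNReal.ofReal_natCast]; norm_cast
    rw [this, ← ENNReal.ofReal_mul (by positivity)]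
    calc ENNReal.ofReal (r^2/6 * (n:ℝ)^2) ≤ ENNReal.ofReal 1 := ENNReal.ofReal_le_ofReal hscal
      _ = 1 := ENNReal.ofReal_one
  calc ENNReal.ofReal (r^2/6) = ENNReal.ofReal (r^2/6) * 1 := (mul_one _).symm
    _ ≤ ENNReal.ofReal (r^2/6) * ((n^2 : ℕ) * Leb (ball x r)) := by
        exact mul_le_mul_right hsum _
    _ = (ENNReal.ofReal (r^2/6) * (n^2 : ℕ)) * Leb (ball x r) := by ring
    _ ≤ 1 * Leb (ball x r) := mul_le_mul_left hmul _
    _ = Leb (ball x r) := one_mul _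

lemma leb_ball_upper (Leb : Measure T2) [IsProbabilityMeasure Leb] [Leb.IsAddHaarMeasure]
    (x : T2) {r : ℝ} (h0 : 0 < r) :
    Leb (ball x r) ≤ ENNReal.ofReal (16*r^2) := by
  rcases lt_or_ge (1/4 : ℝ) r with h4 | h4
  · calc Leb (ball x r) ≤ 1 := prob_le_one
      _ ≤ ENNReal.ofReal (16*r^2) := by
          rw [show (1:ℝ≥0∞) = ENNReal.ofReal 1 from ENNReal.ofReal_one.symm]
          exact ENNReal.ofReal_le_ofReal (by nlinarith)
  · set n : ℕ := ⌊1/(2*r)⌋₊ with hn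
    have hn2 : 2 ≤ n := by
      apply Nat.le_floor
      rw [le_div_iff₀ (by linarith)]; push_cast; linarith
    have hn0 : 0 < n := by omega
    have hn' : (0:ℝ) < n := by exact_mod_cast hn0
    have hnle : (n:ℝ) ≤ 1/(2*r) := Nat.floor_le (by positivity)
    have hdisj : ((Finset.univ : Finset (Fin 2 → Fin n)) : Set (Fin 2 → Fin n)).PairwiseDisjoint
        (fun v => ball (gridPt n v) r) := by
      intro v _ w _ hvw
      apply ball_disjoint_ball
      calc r + r ≤ 1/(n:ℝ) := by
            rw [le_div_iff₀ hn']
            calc (r + r) * n ≤ (r + r) * (1/(2*r)) := by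
                  apply mul_le_mul_of_nonneg_left hnle (by linarith)
              _ = 1 := by field_simp; ring
        _ ≤ dist (gridPt n v) (gridPt n w) := gridPt_dist_lb hn0 hvw
    have hsum : (n^2 : ℕ) * Leb (ball x r) ≤ 1 := by
      calc (n^2 : ℕ) * Leb (ball x r)
          = ∑ _v ∈ (Finset.univ : Finset (Fin 2 → Fin n)), Leb (ball x r) := by
            rw [Finset.sum_const, Finset.card_univ, Fintype.card_fun]
            simp [nsmul_eq_mul, Fintype.card_fin]
        _ = ∑ v ∈ (Finset.univ : Finset (Fin 2 → Fin n)), Leb (ball (gridPt n v) r) :=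
            Finset.sum_congr rfl fun v _ => leb_ball_eq Leb x (gridPt n v) r
        _ = Leb (⋃ v ∈ (Finset.univ : Finset (Fin 2 → Fin n)), ball (gridPt n v) r) :=
            (measure_biUnion_finset hdisj fun v _ => measurableSet_ball).symm
        _ ≤ 1 := prob_le_one
    have hscal : (1:ℝ) ≤ 16*r^2 * (n:ℝ)^2 := by
      have hge : 1/(4*r) ≤ (n:ℝ) := by
        have := Nat.lt_floor_add_one (1/(2*r))
        rw [hn]; push_cast
        have hfl : 1/(2*r) - 1 ≤ (⌊1/(2*r)⌋₊:ℝ) := by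
          have := Nat.lt_floor_add_one (1/(2*r)); linarith
        have : 1/(4*r) ≤ 1/(2*r) - 1 := by
          rw [div_sub' (by linarith : (2*r) ≠ 0), div_le_div_iff₀ (by linarith) (by linarith)]
          nlinarith
        linarith
      have h2 : (1/(4*r))^2 ≤ (n:ℝ)^2 := by
        have : (0:ℝ) ≤ 1/(4*r) := by positivity
        nlinarith
      calc (1:ℝ) = 16*r^2 * (1/(4*r))^2 := by field_simp; ring
        _ ≤ 16*r^2 * (n:ℝ)^2 := by nlinarith
    have hmul : (1:ℝ≥0∞) ≤ ENNReal.ofReal (16*r^2) * (n^2 : ℕ) := by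
      have : ((n^2:ℕ) : ℝ≥0∞) = ENNReal.ofReal ((n:ℝ)^2) := by
        rw [← ENNReal.ofReal_natCast]; norm_cast
      rw [this, ← ENNReal.ofReal_mul (by positivity)]
      rw [show (1:ℝ≥0∞) = ENNReal.ofReal 1 from ENNReal.ofReal_one.symm]
      exact ENNReal.ofReal_le_ofReal hscal
    calc Leb (ball x r) = 1 * Leb (ball x r) := (one_mul _).symm
      _ ≤ (ENNReal.ofReal (16*r^2) * (n^2 : ℕ)) * Leb (ball x r) := mul_le_mul_left hmul _
      _ = ENNReal.ofReal (16*r^2) * ((n^2 : ℕ) * Leb (ball x r)) := by ring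
      _ ≤ ENNReal.ofReal (16*r^2) * 1 := mul_le_mul_right hsum _
      _ = ENNReal.ofReal (16*r^2) := mul_one _


lemma lintegral_sq_le {α : Type*} [MeasurableSpace α] (μ : Measure α) (f : α → ℝ≥0∞)
    (hf : AEMeasurable f μ) :
    (∫⁻ a, f a ∂μ) ^ 2 ≤ μ Set.univ * ∫⁻ a, f a ^ 2 ∂μ := by
  have hconj : Real.HolderConjugate 2 2 := Real.HolderConjugate.two_two
  have h := ENNReal.lintegral_mul_le_Lp_mul_Lq μ hconj hf aemeasurable_const (g := fun _ => 1)
  simp only [mul_one, Pi.mul_apply] at h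
  have h1 : ∫⁻ a, (1:ℝ≥0∞) ^ (2:ℝ) ∂μ = μ Set.univ := by simp
  rw [h1] at h
  have h2 : ∀ x : ℝ≥0∞, x ^ (2:ℝ) = x ^ (2:ℕ) := fun x => by
    rw [← ENNReal.rpow_natCast x 2]; norm_num
  simp only [h2] at h
  have hsq : ∀ X : ℝ≥0∞, (X ^ ((1:ℝ)/2)) ^ (2:ℕ) = X := fun X => by
    rw [← ENNReal.rpow_natCast (X ^ ((1:ℝ)/2)) 2, ← ENNReal.rpow_mul]
    norm_num
  calc (∫⁻ a, f a ∂μ) ^ 2 ≤ ((∫⁻ a, f a ^ (2:ℕ) ∂μ) ^ ((1:ℝ)/2) * (μ Set.univ) ^ ((1:ℝ)/2)) ^ (2:ℕ) := by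
        exact pow_le_pow_left' h 2
    _ = (∫⁻ a, f a ^ (2:ℕ) ∂μ) * μ Set.univ := by rw [mul_pow, hsq, hsq]
    _ = μ Set.univ * ∫⁻ a, f a ^ (2:ℕ) ∂μ := mul_comm _ _

lemma dyadic_exists {a b c : ℝ} (ha : 0 < a) (hab : a ≤ b) (hbc : b ≤ c) :
    ∃ k : ℕ, k ≤ ⌊Real.logb 2 (c/a)⌋₊ ∧ a*2^k ≤ b ∧ b < a*2^(k+1) := by
  have hb0 : 0 < b := lt_of_lt_of_le ha hab
  set y := b/a with hy
  have hy1 : 1 ≤ y := (one_le_div ha).mpr hab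
  have hy0 : 0 < y := lt_of_lt_of_le one_pos hy1
  set k := ⌊Real.logb 2 y⌋₊ with hk
  have hlognn : 0 ≤ Real.logb 2 y := Real.logb_nonneg one_lt_two hy1
  have h1 : (2:ℝ)^(k:ℕ) ≤ y := by
    have hle : (k:ℝ) ≤ Real.logb 2 y := Nat.floor_le hlognn
    have := Real.rpow_le_rpow_of_exponent_le one_le_two hle
    rwa [Real.rpow_natCast, Real.rpow_logb two_pos (by norm_num) hy0] at this
  have h2 : y < (2:ℝ)^(k+1 : ℕ) := by
    have hlt : Real.logb 2 y < (k:ℝ) + 1 := Nat.lt_floor_add_one _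
    have := Real.rpow_lt_rpow_of_exponent_lt one_lt_two hlt
    rw [Real.rpow_logb two_pos (by norm_num) hy0] at this
    calc y < (2:ℝ) ^ ((k:ℝ)+1) := this
      _ = (2:ℝ)^(k+1:ℕ) := by rw [← Real.rpow_natCast]; norm_num
  refine ⟨k, ?_, ?_, ?_⟩
  · apply Nat.floor_mono
    apply Real.logb_le_logb_of_le one_lt_two hy0
    rw [hy]; gcongr
  · rw [mul_comm, ← le_div_iff₀ ha]; exact h1
  · rw [mul_comm, ← div_lt_iff₀ ha]; exact h2


lemma hS_meas {r : T2 → ℝ} (hr : Measurable r) :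
    MeasurableSet {p : T2 × T2 | dist p.2 p.1 < r p.1} :=
  measurableSet_lt (measurable_snd.dist measurable_fst) (hr.comp measurable_fst)

lemma section_eq (r : T2 → ℝ) (x : T2) :
    Prod.mk x ⁻¹' {p : T2 × T2 | dist p.2 p.1 < r p.1} = ball x (r x) := by
  ext y; simp [mem_ball]

lemma indicator_section (S : Set (T2 × T2)) (x y : T2) :
    S.indicator (1 : T2 × T2 → ℝ≥0∞) (x, y) = (Prod.mk x ⁻¹' S).indicator 1 y := by
  by_cases h : (x, y) ∈ S <;> simp [Set.indicator_apply, h, Set.mem_preimage]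

lemma nu_ball_lintegral (ν : Measure T2) [SFinite ν] {r : T2 → ℝ} (hr : Measurable r) (x : T2) :
    ν (ball x (r x)) = ∫⁻ y, ({p : T2 × T2 | dist p.2 p.1 < r p.1}).indicator 1 (x, y) ∂ν := by
  simp only [indicator_section]
  rw [lintegral_indicator_one (measurable_prodMk_left (hS_meas hr)), section_eq]

lemma meas_nu_ball (ν : Measure T2) [SFinite ν] {r : T2 → ℝ} (hr : Measurable r) :
    Measurable fun x => ν (ball x (r x)) := by
  have : (fun x => ν (ball x (r x)))
      = fun x => ∫⁻ y, ({p : T2 × T2 | dist p.2 p.1 < r p.1}).indicator 1 (x, y) ∂ν :=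
    funext fun x => nu_ball_lintegral ν hr x
  rw [this]
  exact Measurable.lintegral_prod_right' (measurable_one.indicator (hS_meas hr))


lemma stepA (Leb : Measure T2) [IsProbabilityMeasure Leb] [Leb.IsAddHaarMeasure]
    (ν : Measure T2) [IsFiniteMeasure ν] {ρ : ℝ} (hρ0 : 0 < ρ) (hρ1 : ρ ≤ 1)
    {t : ℝ} (x : T2) :
    ENNReal.ofReal (ρ^2/6) * ν (ball x t) ≤ ∫⁻ z in ball x (t + ρ), ν (ball z ρ) ∂Leb := by
  set S : Set (T2 × T2) := {p : T2 × T2 | dist p.2 p.1 < ρ} with hSdef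
  have hS : MeasurableSet S := hS_meas measurable_const
  set B := ball x (t + ρ) with hB
  have h1 : ∫⁻ z in B, ν (ball z ρ) ∂Leb = ∫⁻ z in B, ∫⁻ y, S.indicator 1 (z, y) ∂ν ∂Leb := by
    refine lintegral_congr fun z => ?_
    exact nu_ball_lintegral ν measurable_const z
  have hswap : ∫⁻ z in B, ∫⁻ y, S.indicator 1 (z, y) ∂ν ∂Leb
      = ∫⁻ y, ∫⁻ z in B, S.indicator 1 (z, y) ∂Leb ∂ν := by
    apply lintegral_lintegral_swap
    apply Measurable.aemeasurable
    have : (Function.uncurry fun z y => S.indicator (1 : T2 × T2 → ℝ≥0∞) (z, y))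
        = S.indicator 1 := by ext p; simp [Function.uncurry]
    rw [this]
    exact measurable_one.indicator hS
  have hinner : ∀ y : T2, ∫⁻ z in B, S.indicator 1 (z, y) ∂Leb = Leb (ball y ρ ∩ B) := by
    intro y
    have : (fun z => S.indicator (1 : T2 × T2 → ℝ≥0∞) (z, y)) = (ball y ρ).indicator 1 := by
      ext z
      have : (z, y) ∈ S ↔ z ∈ ball y ρ := by
        simp only [hSdef, Set.mem_setOf_eq, mem_ball, dist_comm]
      by_cases h : z ∈ ball y ρ <;> simp [Set.indicator_apply, this, h]
    rw [this, lintegral_indicator_one measurableSet_ball, Measure.restrict_apply measurableSet_ball]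
  rw [h1, hswap]
  have hlow : ∀ y : T2, (ball x t).indicator (fun _ => ENNReal.ofReal (ρ^2/6)) y
      ≤ Leb (ball y ρ ∩ B) := by
    intro y
    by_cases hy : y ∈ ball x t
    · rw [Set.indicator_of_mem hy]
      have hsub : ball y ρ ⊆ B := by
        intro z hz
        rw [hB, mem_ball]
        calc dist z x ≤ dist z y + dist y x := dist_triangle z y x
          _ < ρ + t := add_lt_add (mem_ball.mp hz) (mem_ball.mp hy)
          _ = t + ρ := add_comm _ _
      rw [Set.inter_eq_left.mpr hsub]
      exact leb_ball_lower Leb y hρ0 hρ1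
    · rw [Set.indicator_of_notMem hy]; exact zero_le
  calc ENNReal.ofReal (ρ^2/6) * ν (ball x t)
      = ∫⁻ y, (ball x t).indicator (fun _ => ENNReal.ofReal (ρ^2/6)) y ∂ν := by
        rw [lintegral_indicator_const measurableSet_ball]
    _ ≤ ∫⁻ y, Leb (ball y ρ ∩ B) ∂ν := lintegral_mono hlow
    _ = ∫⁻ y, ∫⁻ z in B, S.indicator 1 (z, y) ∂Leb ∂ν := by
        refine lintegral_congr fun y => (hinner y).symm

end Aux


/-- There exists a constant `C₂ > 1`, depending only on `C₀`, such that for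
any `0 < ρ ≤ δ₋ ≤ δ₊ ≤ 1`, any measurable `δ : T² → ℝ` with values in `[δ₋,δ₊]`, and any
finite Borel measure `ν` on `T²`, one has
`‖ν‖²_δ ≤ C₂·(1 + log(δ₊/δ₋))·‖ν‖²_ρ`. -/
theorem rnormSqFun_le_of_scales
    (C₀ : ℝ) (hC₀ : 1 ≤ C₀) :
    ∃ C₂ : ℝ, 1 < C₂ ∧
      ∀ (Leb m : Measure T2), IsProbabilityMeasure Leb → Leb.IsAddHaarMeasure →
        IsProbabilityMeasure m → DensityBounds C₀ Leb m →
        ∀ ρ δminus δplus : ℝ, 0 < ρ → ρ ≤ δminus → δminus ≤ δplus → δplus ≤ 1 →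
          ∀ δ : T2 → ℝ, Measurable δ → (∀ x, δ x ∈ Set.Icc δminus δplus) →
            ∀ (ν : Measure T2), IsFiniteMeasure ν →
              rnormSqFun m ν δ ≤ C₂ * (1 + Real.log (δplus / δminus)) * rinner m ν ν ρ := by
  have hC₀0 : 0 < C₀ := lt_of_lt_of_le one_pos hC₀
  refine ⟨2000000 * C₀^2, by nlinarith, ?_⟩
  intro Leb m hLebP hHaar hmP db ρ δminus δplus hρ0 hρδ hδmp hδp1 δ hδ hδmem ν hν
  haveI := hLebP; haveI := hHaar; haveI := hmP; haveI := hν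
  have hδm0 : 0 < δminus := lt_of_lt_of_le hρ0 hρδ
  have hρ1 : ρ ≤ 1 := le_trans hρδ (le_trans hδmp hδp1)
  set R := δplus / δminus with hR
  have hR1 : 1 ≤ R := (one_le_div hδm0).mpr hδmp
  have hlogR : 0 ≤ Real.log R := Real.log_nonneg hR1
  have h1logR : (0:ℝ) ≤ 1 + Real.log R := by linarith
  set K := ⌊Real.logb 2 R⌋₊ with hK
  set g : T2 → ℝ≥0∞ := fun z => ν (ball z ρ) with hg
  set F : T2 → ℝ≥0∞ := fun x => ν (ball x (δ x)) with hF
  set M : ℝ≥0∞ := ν Set.univ with hM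
  have hMtop : M ≠ ⊤ := measure_ne_top ν _
  have hgle : ∀ z, g z ≤ M := fun z => measure_mono (Set.subset_univ _)
  have hgtop : ∀ z, g z ≠ ⊤ := fun z => ne_top_of_le_ne_top hMtop (hgle z)
  have hgsq_ne : ∀ z, g z ^ 2 ≠ ⊤ := fun z => ENNReal.pow_ne_top (hgtop z)
  have hgmeas : Measurable g := meas_nu_ball ν measurable_const
  have hFmeas : Measurable F := meas_nu_ball ν hδ
  have hS' : MeasurableSet {p : T2 × T2 | dist p.2 p.1 < 2 * δ p.1} :=
    hS_meas (hδ.const_mul 2)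
  set S' : Set (T2 × T2) := {p : T2 × T2 | dist p.2 p.1 < 2 * δ p.1} with hS'def
  set J : T2 → ℝ≥0∞ := fun x => ∫⁻ z, S'.indicator 1 (x, z) * g z ^ 2 ∂Leb with hJ
  -- Claim 1 : pointwise bound
  have claim1 : ∀ x, F x ^ 2 / ENNReal.ofReal (δ x ^ 4)
      ≤ ENNReal.ofReal (2304 / ρ^4) * (ENNReal.ofReal ((δ x ^ 2)⁻¹) * J x) := by
    intro x
    obtain ⟨hx1, hx2⟩ := hδmem x
    have hδx0 : 0 < δ x := lt_of_lt_of_le hδm0 hx1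
    have hρδx : ρ ≤ δ x := le_trans hρδ hx1
    set B := ball x (δ x + ρ) with hB
    set Intg := ∫⁻ z in B, g z ∂Leb with hI
    have h2 : F x ≤ ENNReal.ofReal (6/ρ^2) * Intg := by
      have h1 : ENNReal.ofReal (ρ^2/6) * F x ≤ Intg := stepA Leb ν hρ0 hρ1 x
      calc F x = (ENNReal.ofReal (6/ρ^2) * ENNReal.ofReal (ρ^2/6)) * F x := by
            rw [← ENNReal.ofReal_mul (by positivity)]
            rw [show 6/ρ^2 * (ρ^2/6) = 1 by field_simp]
            simp
        _ = ENNReal.ofReal (6/ρ^2) * (ENNReal.ofReal (ρ^2/6) * F x) := mul_assoc _ _ _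
        _ ≤ ENNReal.ofReal (6/ρ^2) * Intg := mul_le_mul_right h1 _
    have h3 : F x ^ 2 ≤ ENNReal.ofReal (36/ρ^4) * Intg ^ 2 := by
      calc F x ^ 2 ≤ (ENNReal.ofReal (6/ρ^2) * Intg)^2 := pow_le_pow_left' h2 2
        _ = ENNReal.ofReal (6/ρ^2)^2 * Intg^2 := mul_pow _ _ 2
        _ = ENNReal.ofReal (36/ρ^4) * Intg^2 := by
            rw [← ENNReal.ofReal_pow (by positivity)]
            congr 2
            rw [div_pow]; ring
    have h4 : Intg ^ 2 ≤ Leb B * ∫⁻ z in B, g z ^ 2 ∂Leb := by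
      have := lintegral_sq_le (Leb.restrict B) g hgmeas.aemeasurable
      rwa [Measure.restrict_apply_univ] at this
    have h5 : Leb B ≤ ENNReal.ofReal (64 * δ x ^ 2) := by
      calc Leb B ≤ ENNReal.ofReal (16 * (δ x + ρ)^2) := leb_ball_upper Leb x (by positivity)
        _ ≤ ENNReal.ofReal (64 * δ x ^ 2) := ENNReal.ofReal_le_ofReal (by nlinarith)
    have h7 : J x = ∫⁻ z in ball x (2 * δ x), g z ^ 2 ∂Leb := by
      rw [hJ, ← lintegral_indicator measurableSet_ball]
      refine lintegral_congr fun z => ?_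
      by_cases hz : z ∈ ball x (2 * δ x)
      · have hz' : (x, z) ∈ S' := by
          simpa [hS'def, Set.mem_setOf_eq, mem_ball] using hz
        rw [Set.indicator_of_mem hz, Set.indicator_of_mem hz']
        simp
      · have hz' : (x, z) ∉ S' := by
          simpa [hS'def, Set.mem_setOf_eq, mem_ball] using hz
        rw [Set.indicator_of_notMem hz, Set.indicator_of_notMem hz']
        simp
    have h6 : ∫⁻ z in B, g z ^ 2 ∂Leb ≤ J x := by
      rw [h7]
      exact lintegral_mono_set (ball_subset_ball (by linarith))
    calc F x ^ 2 / ENNReal.ofReal (δ x ^ 4)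
        ≤ (ENNReal.ofReal (36/ρ^4) * (ENNReal.ofReal (64 * δ x ^ 2) * J x)) / ENNReal.ofReal (δ x ^ 4) := by
          apply ENNReal.div_le_div_right
          calc F x ^ 2 ≤ ENNReal.ofReal (36/ρ^4) * Intg^2 := h3
            _ ≤ ENNReal.ofReal (36/ρ^4) * (Leb B * ∫⁻ z in B, g z ^ 2 ∂Leb) := mul_le_mul_right h4 _
            _ ≤ ENNReal.ofReal (36/ρ^4) * (ENNReal.ofReal (64 * δ x ^ 2) * J x) :=
                mul_le_mul_right (mul_le_mul' h5 h6) _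
      _ = ENNReal.ofReal (2304 * δ x ^ 2 / ρ^4) / ENNReal.ofReal (δ x ^ 4) * J x := by
          rw [← mul_assoc, ← ENNReal.ofReal_mul (by positivity)]
          rw [show 36/ρ^4 * (64 * δ x ^ 2) = 2304 * δ x ^ 2/ρ^4 by ring]
          rw [div_eq_mul_inv, div_eq_mul_inv, mul_right_comm, ← div_eq_mul_inv, div_eq_mul_inv]
      _ = ENNReal.ofReal (2304/ρ^4) * (ENNReal.ofReal ((δ x ^ 2)⁻¹) * J x) := by
          rw [← ENNReal.ofReal_div_of_pos (by positivity)]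
          rw [show 2304 * δ x ^ 2/ρ^4 / δ x ^ 4 = 2304/ρ^4 * (δ x ^ 2)⁻¹ by field_simp]
          rw [ENNReal.ofReal_mul (by positivity), mul_assoc]
  -- measure comparisons
  have hmL : ∀ f : T2 → ℝ≥0∞, ∫⁻ x, f x ∂m ≤ ENNReal.ofReal C₀ * ∫⁻ x, f x ∂Leb := by
    intro f
    have hle : m ≤ ENNReal.ofReal C₀ • Leb := by
      refine Measure.le_iff.mpr fun s hs => ?_
      rw [Measure.smul_apply, smul_eq_mul]
      exact (db s hs).2
    calc ∫⁻ x, f x ∂m ≤ ∫⁻ x, f x ∂(ENNReal.ofReal C₀ • Leb) := lintegral_mono' hle le_rfl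
      _ = ENNReal.ofReal C₀ * ∫⁻ x, f x ∂Leb := lintegral_smul_measure _ _
  have hLm : ∀ f : T2 → ℝ≥0∞, ∫⁻ x, f x ∂Leb ≤ ENNReal.ofReal C₀ * ∫⁻ x, f x ∂m := by
    intro f
    have hle : Leb ≤ ENNReal.ofReal C₀ • m := by
      refine Measure.le_iff.mpr fun s hs => ?_
      rw [Measure.smul_apply, smul_eq_mul]
      calc Leb s = ENNReal.ofReal C₀ * (ENNReal.ofReal C₀⁻¹ * Leb s) := by
            rw [← mul_assoc, ← ENNReal.ofReal_mul hC₀0.le, mul_inv_cancel₀ (ne_of_gt hC₀0),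
              ENNReal.ofReal_one, one_mul]
        _ ≤ ENNReal.ofReal C₀ * m s := mul_le_mul_right (db s hs).1 _
    calc ∫⁻ x, f x ∂Leb ≤ ∫⁻ x, f x ∂(ENNReal.ofReal C₀ • m) := lintegral_mono' hle le_rfl
      _ = ENNReal.ofReal C₀ * ∫⁻ x, f x ∂m := lintegral_smul_measure _ _
  -- the W bound
  set W : T2 → ℝ≥0∞ := fun z => ∫⁻ x, ENNReal.ofReal ((δ x ^ 2)⁻¹) * S'.indicator 1 (x, z) ∂Leb
    with hW
  have hWbound : ∀ z, W z ≤ ENNReal.ofReal (256 * ((K:ℝ)+1)) := by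
    intro z
    have hpt : ∀ x, ENNReal.ofReal ((δ x ^ 2)⁻¹) * S'.indicator 1 (x, z)
        ≤ ∑ k ∈ Finset.range (K+1),
            (ball z (4*(δminus*2^k))).indicator
              (fun _ => ENNReal.ofReal (((δminus*2^k)^2)⁻¹)) x := by
      intro x
      by_cases hx : (x, z) ∈ S'
      · obtain ⟨hx1, hx2⟩ := hδmem x
        have hδx0 : 0 < δ x := lt_of_lt_of_le hδm0 hx1
        obtain ⟨k, hkK, hk1, hk2⟩ := dyadic_exists hδm0 hx1 hx2
        have hs0 : (0:ℝ) < δminus * 2^k := by positivity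
        have hmem : x ∈ ball z (4*(δminus*2^k)) := by
          rw [mem_ball]
          have hdzx : dist z x < 2 * δ x := hx
          have hk2' : δ x < δminus * 2^k * 2 := by
            rw [pow_succ] at hk2; linarith [hk2]
          calc dist x z = dist z x := dist_comm x z
            _ < 2 * δ x := hdzx
            _ ≤ 4*(δminus*2^k) := by nlinarith
        have hkK' : k ≤ K := by rw [hK, hR]; exact hkK
        refine le_trans ?_ (Finset.single_le_sum
          (f := fun k => (ball z (4*(δminus*2^k))).indicator
            (fun _ => ENNReal.ofReal (((δminus*2^k)^2)⁻¹)) x)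
          (fun i _ => zero_le) (Finset.mem_range.mpr (Nat.lt_succ_of_le hkK')))
        show _ ≤ (ball z (4*(δminus*2^k))).indicator
            (fun _ => ENNReal.ofReal (((δminus*2^k)^2)⁻¹)) x
        rw [Set.indicator_of_mem hmem]
        have hind : S'.indicator (1 : T2 × T2 → ℝ≥0∞) (x, z) = 1 := Set.indicator_of_mem hx 1
        rw [hind, mul_one]
        apply ENNReal.ofReal_le_ofReal
        have hsq : (δminus*2^k)^2 ≤ δ x ^ 2 := by nlinarith
        exact inv_anti₀ (by positivity) hsq
      · have hind : S'.indicator (1 : T2 × T2 → ℝ≥0∞) (x, z) = 0 := Set.indicator_of_notMem hx 1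
        rw [hind, mul_zero]
        exact zero_le
    calc W z ≤ ∫⁻ x, ∑ k ∈ Finset.range (K+1),
          (ball z (4*(δminus*2^k))).indicator
            (fun _ => ENNReal.ofReal (((δminus*2^k)^2)⁻¹)) x ∂Leb := lintegral_mono hpt
      _ = ∑ k ∈ Finset.range (K+1), ∫⁻ x,
            (ball z (4*(δminus*2^k))).indicator
              (fun _ => ENNReal.ofReal (((δminus*2^k)^2)⁻¹)) x ∂Leb :=
          lintegral_finset_sum _ (fun k _ => measurable_const.indicator measurableSet_ball)
      _ ≤ ∑ _k ∈ Finset.range (K+1), ENNReal.ofReal 256 := by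
          apply Finset.sum_le_sum
          intro k _
          rw [lintegral_indicator_const measurableSet_ball]
          have hs0 : (0:ℝ) < δminus * 2^k := by positivity
          calc ENNReal.ofReal (((δminus*2^k)^2)⁻¹) * Leb (ball z (4*(δminus*2^k)))
              ≤ ENNReal.ofReal (((δminus*2^k)^2)⁻¹) * ENNReal.ofReal (16*(4*(δminus*2^k))^2) :=
                mul_le_mul_right (leb_ball_upper Leb z (by positivity)) _
            _ = ENNReal.ofReal 256 := by
                rw [← ENNReal.ofReal_mul (by positivity)]
                congr 1
                field_simp
                ring
      _ = ENNReal.ofReal (256 * ((K:ℝ)+1)) := by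
          rw [Finset.sum_const, Finset.card_range, nsmul_eq_mul]
          rw [show ((K+1 : ℕ) : ℝ≥0∞) = ENNReal.ofReal ((K:ℝ)+1) by
            rw [← ENNReal.ofReal_natCast (K+1)]; norm_num]
          rw [← ENNReal.ofReal_mul (by positivity)]
          rw [mul_comm]
  -- Claim 3 : Tonelli
  have claim3 : ∫⁻ x, ENNReal.ofReal ((δ x ^ 2)⁻¹) * J x ∂Leb
      ≤ ENNReal.ofReal (256*((K:ℝ)+1)) * ∫⁻ z, g z ^ 2 ∂Leb := by
    set f2 : T2 → T2 → ℝ≥0∞ :=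
      fun x z => g z ^ 2 * (ENNReal.ofReal ((δ x ^ 2)⁻¹) * S'.indicator 1 (x, z)) with hf2
    have h1 : ∀ x, ENNReal.ofReal ((δ x ^ 2)⁻¹) * J x = ∫⁻ z, f2 x z ∂Leb := by
      intro x
      rw [hJ, ← lintegral_const_mul' _ _ ENNReal.ofReal_ne_top]
      refine lintegral_congr fun z => ?_
      simp only [hf2]
      ring
    have hmeasf2 : AEMeasurable (Function.uncurry f2) (Leb.prod Leb) := by
      apply Measurable.aemeasurable
      have huncurry : Function.uncurry f2 = fun p : T2 × T2 =>
          g p.2 ^ 2 * (ENNReal.ofReal ((δ p.1 ^ 2)⁻¹) * S'.indicator 1 p) := by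
        ext p
        simp [Function.uncurry, hf2]
      rw [huncurry]
      exact ((hgmeas.comp measurable_snd).pow_const 2).mul
        ((ENNReal.measurable_ofReal.comp (((hδ.comp measurable_fst).pow_const 2).inv)).mul
          (measurable_one.indicator hS'))
    calc ∫⁻ x, ENNReal.ofReal ((δ x ^ 2)⁻¹) * J x ∂Leb
        = ∫⁻ x, ∫⁻ z, f2 x z ∂Leb ∂Leb := lintegral_congr h1
      _ = ∫⁻ z, ∫⁻ x, f2 x z ∂Leb ∂Leb := lintegral_lintegral_swap hmeasf2
      _ = ∫⁻ z, g z ^ 2 * W z ∂Leb := by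
          refine lintegral_congr fun z => ?_
          rw [hW]
          exact lintegral_const_mul' _ _ (hgsq_ne z)
      _ ≤ ∫⁻ z, g z ^ 2 * ENNReal.ofReal (256*((K:ℝ)+1)) ∂Leb :=
          lintegral_mono fun z => mul_le_mul_right (hWbound z) _
      _ = ENNReal.ofReal (256*((K:ℝ)+1)) * ∫⁻ z, g z ^ 2 ∂Leb := by
          rw [← lintegral_const_mul' _ _ ENNReal.ofReal_ne_top]
          exact lintegral_congr fun z => mul_comm _ _
  -- main ENNReal chain
  set LHS' := ∫⁻ x, F x ^ 2 / ENNReal.ofReal (δ x ^ 4) ∂m with hLHS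
  set RHS' := ∫⁻ z, g z ^ 2 ∂m with hRHS
  have hK1 : ((K:ℝ)+1) ≤ 2*(1+Real.log R) := by
    have ha : (K:ℝ) ≤ Real.logb 2 R := Nat.floor_le (Real.logb_nonneg one_lt_two hR1)
    have hb : Real.logb 2 R ≤ 2 * Real.log R := by
      rw [Real.logb, div_le_iff₀ (Real.log_pos one_lt_two)]
      nlinarith [Real.log_two_gt_d9, hlogR]
    linarith
  have hchain : LHS' ≤ ENNReal.ofReal (2000000*C₀^2 * (1 + Real.log R)/ρ^4) * RHS' := by
    calc LHS' ≤ ∫⁻ x, ENNReal.ofReal (2304/ρ^4) * (ENNReal.ofReal ((δ x ^ 2)⁻¹) * J x) ∂m :=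
          lintegral_mono claim1
      _ ≤ ENNReal.ofReal C₀ * ∫⁻ x, ENNReal.ofReal (2304/ρ^4) * (ENNReal.ofReal ((δ x ^ 2)⁻¹) * J x) ∂Leb :=
          hmL _
      _ = ENNReal.ofReal C₀ * (ENNReal.ofReal (2304/ρ^4) * ∫⁻ x, ENNReal.ofReal ((δ x ^ 2)⁻¹) * J x ∂Leb) := by
          rw [lintegral_const_mul' _ _ ENNReal.ofReal_ne_top]
      _ ≤ ENNReal.ofReal C₀ * (ENNReal.ofReal (2304/ρ^4) *
            (ENNReal.ofReal (256*((K:ℝ)+1)) * ∫⁻ z, g z ^ 2 ∂Leb)) :=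
          mul_le_mul_right (mul_le_mul_right claim3 _) _
      _ ≤ ENNReal.ofReal C₀ * (ENNReal.ofReal (2304/ρ^4) *
            (ENNReal.ofReal (256*((K:ℝ)+1)) * (ENNReal.ofReal C₀ * RHS'))) :=
          mul_le_mul_right (mul_le_mul_right (mul_le_mul_right (hLm _) _) _) _
      _ = ENNReal.ofReal (C₀ * (2304/ρ^4 * (256*((K:ℝ)+1) * C₀))) * RHS' := by
          rw [ENNReal.ofReal_mul hC₀0.le, ENNReal.ofReal_mul (by positivity : (0:ℝ) ≤ 2304/ρ^4),
            ENNReal.ofReal_mul (by positivity : (0:ℝ) ≤ 256*((K:ℝ)+1))]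
          ring
      _ ≤ ENNReal.ofReal (2000000*C₀^2 * (1 + Real.log R)/ρ^4) * RHS' := by
          apply mul_le_mul_left
          apply ENNReal.ofReal_le_ofReal
          have hnum : 589824*C₀^2*((K:ℝ)+1) ≤ 2000000*C₀^2*(1+Real.log R) := by
            nlinarith [mul_le_mul_of_nonneg_left hK1 (by positivity : (0:ℝ) ≤ 589824*C₀^2),
              mul_nonneg (by positivity : (0:ℝ) ≤ C₀^2) h1logR]
          have hstep := mul_le_mul_of_nonneg_right hnum (by positivity : (0:ℝ) ≤ (ρ^4)⁻¹)
          calc C₀ * (2304/ρ^4 * (256*((K:ℝ)+1) * C₀))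
              = 589824*C₀^2*((K:ℝ)+1) * (ρ^4)⁻¹ := by ring
            _ ≤ 2000000*C₀^2*(1+Real.log R) * (ρ^4)⁻¹ := hstep
            _ = 2000000*C₀^2 * (1 + Real.log R)/ρ^4 := by ring
  -- convert to real integrals
  have hRHS'ne : RHS' ≠ ⊤ := by
    have hle : RHS' ≤ M ^ 2 := by
      calc RHS' ≤ ∫⁻ _, M ^ 2 ∂m := lintegral_mono fun z => pow_le_pow_left' (hgle z) 2
        _ = M ^ 2 := by simp [lintegral_const]
    exact ne_top_of_le_ne_top (ENNReal.pow_ne_top hMtop) hle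
  have e1 : rnormSqFun m ν δ = LHS'.toReal := by
    rw [rnormSqFun, hLHS]
    have he : ∀ x, (ν (ball x (δ x))).toReal ^ 2 / δ x ^ 4
        = ((F x) ^ 2 / ENNReal.ofReal (δ x ^ 4)).toReal := by
      intro x
      have hδx0 : 0 < δ x := lt_of_lt_of_le hδm0 (hδmem x).1
      rw [ENNReal.toReal_div, ENNReal.toReal_pow, ENNReal.toReal_ofReal (by positivity)]
    rw [integral_congr_ae (Eventually.of_forall he)]
    apply integral_toReal
    · exact ((hFmeas.pow_const 2).div (ENNReal.measurable_ofReal.comp (hδ.pow_const 4))).aemeasurable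
    · refine Eventually.of_forall fun x => ?_
      have hδx0 : 0 < δ x := lt_of_lt_of_le hδm0 (hδmem x).1
      exact ENNReal.div_lt_top (ENNReal.pow_ne_top (ne_top_of_le_ne_top hMtop (measure_mono (Set.subset_univ _))))
        (ENNReal.ofReal_pos.mpr (by positivity)).ne'
  have e2 : rinner m ν ν ρ = (1/ρ^4) * RHS'.toReal := by
    rw [rinner, hRHS]
    congr 1
    have he : ∀ z, (ν (ball z ρ)).toReal * (ν (ball z ρ)).toReal = ((g z) ^ 2).toReal := by
      intro z
      rw [pow_two, ENNReal.toReal_mul]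
    rw [integral_congr_ae (Eventually.of_forall he)]
    apply integral_toReal
    · exact (hgmeas.pow_const 2).aemeasurable
    · exact Eventually.of_forall fun z => (hgsq_ne z).lt_top
  rw [e1, e2]
  have h := ENNReal.toReal_mono (ENNReal.mul_ne_top ENNReal.ofReal_ne_top hRHS'ne) hchain
  rw [ENNReal.toReal_mul, ENNReal.toReal_ofReal
    (div_nonneg (mul_nonneg (by positivity) h1logR) (by positivity : (0:ℝ) ≤ ρ^4))] at h
  calc LHS'.toReal ≤ 2000000*C₀^2 * (1 + Real.log R)/ρ^4 * RHS'.toReal := h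
    _ = 2000000*C₀^2 * (1 + Real.log R) * (1/ρ^4 * RHS'.toReal) := by ring
end
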